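/- Let X, Y be real Hilbert spaces, f, g : X × Y → ℝ, and fix x ∈ X. Suppose: (i) g(x,·) is differentiable in y with gradient ∇₂g(x,·), and H(x,·) : Y → (Y →L[ℝ] Y) is a Hessian field of g(x,·) (for every y, ∇₂g(x,·) has Fréchet derivative H(x,y) at y) with ⟨H(x,y)v, v⟩ ≥ μ‖v‖² (μ > 0), ‖H(x,y) − H(x,y')‖_op ≤ L_{g,2}‖y − y'‖, and every H(x,y) invertible; (ii) y*(x) ∈ Y satisfies ∇₂g(x, y*(x)) = 0; (iii) f(·,·) is differentiable with partial gradients ∇₁f, ∇₂f, J : X × Y → (Y →L[ℝ] X) is a map (playing the role of the cross derivative ∇²₁₂g), Φ(x) := f(x, y*(x)) has gradient ∇Φ(x), and the approximate hypergradient ∇̂Φ(x,y) := ∇₁f(x,y) − J(x,y)(u*(x,y)), with u*(x,y) := H(x,y)⁻¹(∇₂f(x,y)), satisfies ‖∇̂Φ(x,y) − ∇Φ(x)‖ ≤ C‖y*(x) − y‖ for all y and some constant C ≥ 0. Then for every y ∈ Y, setting y⁺ := y − H(x,y)⁻¹(∇₂g(x,y)), one has ‖∇̂Φ(x, y⁺)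 − ∇Φ(x)‖ ≤ (C · L_{g,2}/(2μ)) · ‖y*(x) − y‖². -/

import Mathlib

open scoped RealInnerProductSpace

lemma newton_taylor {Y : Type*} [NormedAddCommGroup Y] [NormedSpace ℝ Y] [CompleteSpace Y]
    (G : Y → Y) (H : Y → Y →L[ℝ] Y) (hH : ∀ y, HasFDerivAt G (H y) y)
    (L : ℝ) (hL : 0 ≤ L) (hLip : ∀ a b : Y, ‖H a - H b‖ ≤ L * ‖a - b‖)
    (y z : Y) : ‖G z - G y - H y (z - y)‖ ≤ L / 2 * ‖z - y‖ ^ 2 := by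
  set d := z - y with hd
  set γ : ℝ → Y := fun t => G (y + t • d) - t • (H y d) with hγ
  have hderiv : ∀ t : ℝ, HasDerivAt γ (H (y + t • d) d - H y d) t := by
    intro t
    have h1 : HasDerivAt (fun t : ℝ => y + t • d) d t := by
      simpa using ((hasDerivAt_id t).smul_const d).const_add y
    have h2 := (hH (y + t • d)).comp_hasDerivAt t h1
    have h3 := h2.sub ((hasDerivAt_id t).smul_const (H y d))
    simp only [one_smul] at h3
    convert h3 using 1
    funext s; simp [hγ]
  have hHc : Continuous H := by
    refine (LipschitzWith.of_dist_le_mul (K := ⟨L, hL⟩) ?_).continuous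
    intro a b; rw [dist_eq_norm, dist_eq_norm]; exact hLip a b
  have hcont : Continuous fun t : ℝ => H (y + t • d) d - H y d := by
    exact ((hHc.comp (continuous_const.add (continuous_id.smul continuous_const))).clm_apply
      continuous_const).sub continuous_const
  have key := intervalIntegral.integral_eq_sub_of_hasDerivAt
    (f := γ) (f' := fun t => H (y + t • d) d - H y d)
    (fun t _ => hderiv t) (hcont.intervalIntegrable 0 1)
  have hγ10 : γ 1 - γ 0 = G z - G y - H y d := by
    simp [hγ, hd]; abel
  have hbound : ‖∫ t in (0:ℝ)..1, (H (y + t • d) d - H y d)‖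
      ≤ ∫ t in (0:ℝ)..1, L * t * ‖d‖ ^ 2 := by
    have hnn : (0:ℝ) ≤ ∫ t in (0:ℝ)..1, L * t * ‖d‖ ^ 2 := by
      apply intervalIntegral.integral_nonneg (by norm_num)
      intro u hu; exact mul_nonneg (mul_nonneg hL hu.1) (sq_nonneg _)
    rw [← abs_of_nonneg hnn]
    refine intervalIntegral.norm_integral_le_abs_of_norm_le ?_ ?_
    · filter_upwards [MeasureTheory.ae_restrict_mem measurableSet_uIoc] with t ht
      rw [Set.uIoc_of_le (by norm_num : (0:ℝ) ≤ 1)] at ht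
      calc ‖H (y + t • d) d - H y d‖ = ‖(H (y + t • d) - H y) d‖ := by simp
        _ ≤ ‖H (y + t • d) - H y‖ * ‖d‖ := ContinuousLinearMap.le_opNorm _ _
        _ ≤ (L * ‖t • d‖) * ‖d‖ := by
            gcongr; simpa using hLip (y + t • d) y
        _ = L * |t| * ‖d‖ ^ 2 := by rw [norm_smul]; simp [Real.norm_eq_abs]; ring
        _ = L * t * ‖d‖ ^ 2 := by rw [abs_of_pos ht.1]
    · exact (Continuous.intervalIntegrable (by continuity) 0 1)
  have hval : (∫ t in (0:ℝ)..1, L * t * ‖d‖ ^ 2) = L / 2 * ‖d‖ ^ 2 := by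
    have : (fun t : ℝ => L * t * ‖d‖ ^ 2) = fun t : ℝ => (L * ‖d‖ ^ 2) * t := by
      funext t; ring
    rw [this, intervalIntegral.integral_const_mul, integral_id]
    ring
  calc ‖G z - G y - H y d‖ = ‖γ 1 - γ 0‖ := by rw [hγ10]
    _ = ‖∫ t in (0:ℝ)..1, (H (y + t • d) d - H y d)‖ := by rw [key]
    _ ≤ L / 2 * ‖d‖ ^ 2 := by rw [← hval]; exact hbound


/-- Eq. (5) of the paper: a single exact Newton step on the lower-level problem improves
the hypergradient approximation error from linear to quadratic in `‖y*(x) − y‖`. -/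
theorem stmt_1
    {X Y : Type*} [NormedAddCommGroup X] [InnerProductSpace ℝ X] [CompleteSpace X]
    [NormedAddCommGroup Y] [InnerProductSpace ℝ Y] [CompleteSpace Y]
    (f g : X × Y → ℝ) (x : X)
    (grad2g : X → Y → Y) (H : X → Y → Y →L[ℝ] Y) (Hinv : X → Y → (Y ≃L[ℝ] Y))
    (grad1f : X × Y → X) (grad2f : X × Y → Y) (J : X × Y → (Y →L[ℝ] X))
    (ystar : X → Y) (gradPhi : X → X)
    (μ Lg2 C : ℝ) (hμ : 0 < μ) (hC : 0 ≤ C)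
    -- (i) Hessian field of g(x,·) with coercivity, Lipschitz continuity and invertibility
    (hg : ∀ y : Y, HasGradientAt (fun y' => g (x, y')) (grad2g x y) y)
    (hHess : ∀ y : Y, HasFDerivAt (grad2g x) (H x y) y)
    (hcoerc : ∀ y v : Y, μ * ‖v‖ ^ 2 ≤ ⟪H x y v, v⟫)
    (hLip : ∀ y y' : Y, ‖H x y - H x y'‖ ≤ Lg2 * ‖y - y'‖)
    (hHinv : ∀ y : Y, ((Hinv x y : Y →L[ℝ] Y)) = H x y)
    -- (ii) lower-level optimality
    (hstar : grad2g x (ystar x) = 0)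
    -- (iii) differentiability of f and Φ, and the hypergradient approximation error bound
    (hf1 : ∀ p : X × Y, HasGradientAt (fun x' => f (x', p.2)) (grad1f p) p.1)
    (hf2 : ∀ p : X × Y, HasGradientAt (fun y' => f (p.1, y')) (grad2f p) p.2)
    (hPhi : HasGradientAt (fun x' => f (x', ystar x')) (gradPhi x) x)
    (hhyper : ∀ y : Y,
      ‖(grad1f (x, y) - J (x, y) ((Hinv x y).symm (grad2f (x, y)))) - gradPhi x‖
        ≤ C * ‖ystar x - y‖) :
    ∀ y : Y,
      ‖(grad1f (x, y - (Hinv x y).symm (grad2g x y)) -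
          J (x, y - (Hinv x y).symm (grad2g x y))
            ((Hinv x (y - (Hinv x y).symm (grad2g x y))).symm
              (grad2f (x, y - (Hinv x y).symm (grad2g x y))))) - gradPhi x‖
        ≤ C * Lg2 / (2 * μ) * ‖ystar x - y‖ ^ 2 := by
  intro y
  -- notation
  set e := Hinv x y with he
  set yp := y - e.symm (grad2g x y) with hyp
  have happ : ∀ v : Y, H x y (e.symm v) = v := by
    intro v
    have := congrFun (congrArg (fun (T : Y →L[ℝ] Y) => (T : Y → Y)) (hHinv y)) (e.symm v)
    simpa using this.symm.trans (e.apply_symm_apply v)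
  by_cases hy : y = ystar x
  · have h0 : grad2g x y = 0 := by rw [hy, hstar]
    have : yp = y := by simp [hyp, h0]
    rw [this]
    have := hhyper y
    rw [hy] at this ⊢
    simpa using this
  -- Lg2 ≥ 0
  have hys : ystar x - y ≠ 0 := sub_ne_zero.mpr (Ne.symm hy)
  have hLg2 : 0 ≤ Lg2 := by
    have h1 := hLip (ystar x) y
    have h2 : (0:ℝ) < ‖ystar x - y‖ := norm_pos_iff.mpr hys
    nlinarith [norm_nonneg (H x (ystar x) - H x y)]
  -- coercivity gives lower bound on ‖H v‖
  have hHlb : ∀ v : Y, μ * ‖v‖ ≤ ‖H x y v‖ := by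
    intro v
    rcases eq_or_ne v 0 with rfl | hv
    · simp
    · have h1 := hcoerc y v
      have h2 : ⟪H x y v, v⟫ ≤ ‖H x y v‖ * ‖v‖ := real_inner_le_norm _ _
      have h3 : (0:ℝ) < ‖v‖ := norm_pos_iff.mpr hv
      nlinarith
  -- the Taylor remainder
  set w := grad2g x y - H x y (y - ystar x) with hw
  have hrem : ‖w‖ ≤ Lg2 / 2 * ‖ystar x - y‖ ^ 2 := by
    have ht := newton_taylor (grad2g x) (H x) hHess Lg2 hLg2 (fun a b => hLip a b) y (ystar x)
    rw [hstar] at ht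
    have : w = -(0 - grad2g x y - H x y (ystar x - y)) := by
      rw [hw, show ystar x - y = -(y - ystar x) by abel, map_neg]; abel
    rw [this, norm_neg]
    exact ht
  -- Newton step error
  have hstep : ystar x - yp = e.symm w := by
    have h1 : e.symm (H x y (y - ystar x)) = y - ystar x := by
      have := congrFun (congrArg (fun (T : Y →L[ℝ] Y) => (T : Y → Y)) (hHinv y)) (y - ystar x)
      rw [← this]; exact e.symm_apply_apply _
    rw [hw, map_sub, h1, hyp]
    abel
  have hstepnorm : ‖ystar x - yp‖ ≤ Lg2 / (2 * μ) * ‖ystar x - y‖ ^ 2 := by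
    have h1 : μ * ‖e.symm w‖ ≤ ‖w‖ := by
      have := hHlb (e.symm w)
      rwa [happ w] at this
    rw [hstep, div_mul_eq_mul_div, le_div_iff₀ (by positivity : (0:ℝ) < 2 * μ)]
    nlinarith [hrem, norm_nonneg (e.symm w)]
  -- conclude
  calc ‖(grad1f (x, yp) - J (x, yp) ((Hinv x yp).symm (grad2f (x, yp)))) - gradPhi x‖
      ≤ C * ‖ystar x - yp‖ := hhyper yp
    _ ≤ C * (Lg2 / (2 * μ) * ‖ystar x - y‖ ^ 2) := by
        exact mul_le_mul_of_nonneg_left hstepnorm hC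
    _ = C * Lg2 / (2 * μ) * ‖ystar x - y‖ ^ 2 := by ring
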